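/- For every complex number z with Re z ≠ 0, one has |Re(tanh z / z)| ≤ (sinh(2·|Re z|) + 1) / ( |Re z| · (cosh(2·|Re z|) − 1) ). -/

import Mathlib

open Real

/-- For every complex `z` with `Re z ≠ 0`,
`|Re(tanh z / z)| ≤ (sinh(2|Re z|) + 1)/(|Re z|·(cosh(2|Re z|) − 1))`. -/
theorem stmt_11 (z : ℂ) (hz : z.re ≠ 0) :
    |(Complex.tanh z / z).re|
      ≤ (Real.sinh (2 * |z.re|) + 1) / (|z.re| * (Real.cosh (2 * |z.re|) - 1)) := by
  set x := z.re with hx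
  set y := z.im with hy
  have hxpos : 0 < |x| := abs_pos.mpr hz
  have hs : 0 < Real.sinh |x| := Real.sinh_pos_iff.mpr hxpos
  have hc1 : 1 ≤ Real.cosh |x| := Real.one_le_cosh _
  have hzeq : z = (x : ℂ) + (y : ℂ) * Complex.I := (Complex.re_add_im z).symm
  have hsinh : Complex.sinh z = (Real.sinh x : ℂ) * (Real.cos y : ℂ) +
      (Real.cosh x : ℂ) * ((Real.sin y : ℂ) * Complex.I) := by
    rw [hzeq, Complex.sinh_add, Complex.sinh_mul_I, Complex.cosh_mul_I,
      Complex.ofReal_sinh, Complex.ofReal_cosh, Complex.ofReal_cos, Complex.ofReal_sin]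
  have hcosh : Complex.cosh z = (Real.cosh x : ℂ) * (Real.cos y : ℂ) +
      (Real.sinh x : ℂ) * ((Real.sin y : ℂ) * Complex.I) := by
    rw [hzeq, Complex.cosh_add, Complex.sinh_mul_I, Complex.cosh_mul_I,
      Complex.ofReal_sinh, Complex.ofReal_cosh, Complex.ofReal_cos, Complex.ofReal_sin]
  have hsq1 : (‖Complex.sinh z‖)^2 = Real.sinh x ^ 2 + Real.sin y ^ 2 := by
    rw [Complex.sq_norm, hsinh]
    simp [Complex.normSq_apply, Complex.sinh_ofReal_re, Complex.sinh_ofReal_im,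
      Complex.cosh_ofReal_re, Complex.cosh_ofReal_im, Complex.cos_ofReal_re,
      Complex.cos_ofReal_im, Complex.sin_ofReal_re, Complex.sin_ofReal_im]
    nlinarith [Real.sin_sq_add_cos_sq y, Real.cosh_sq x]
  have hsq2 : (‖Complex.cosh z‖)^2 = Real.sinh x ^ 2 + Real.cos y ^ 2 := by
    rw [Complex.sq_norm, hcosh]
    simp [Complex.normSq_apply, Complex.sinh_ofReal_re, Complex.sinh_ofReal_im,
      Complex.cosh_ofReal_re, Complex.cosh_ofReal_im, Complex.cos_ofReal_re,
      Complex.cos_ofReal_im, Complex.sin_ofReal_re, Complex.sin_ofReal_im]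
    nlinarith [Real.sin_sq_add_cos_sq y, Real.cosh_sq x]
  have hsx : Real.sinh x ^ 2 = Real.sinh |x| ^ 2 := by
    rcases abs_choice x with h | h <;> rw [h] <;> simp [Real.sinh_neg]
  have hsabs : ‖Complex.sinh z‖ ≤ Real.cosh |x| := by
    have h1 : (‖Complex.sinh z‖)^2 ≤ (Real.cosh |x|)^2 := by
      rw [hsq1, hsx]
      nlinarith [Real.sin_sq_le_one y, Real.cosh_sq |x|]
    nlinarith [norm_nonneg (Complex.sinh z), Real.cosh_pos (x := |x|)]
  have hcabs : Real.sinh |x| ≤ ‖Complex.cosh z‖ := by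
    have h1 : (Real.sinh |x|)^2 ≤ (‖Complex.cosh z‖)^2 := by
      rw [hsq2, hsx]; nlinarith [sq_nonneg (Real.cos y)]
    nlinarith [norm_nonneg (Complex.cosh z)]
  have hxle : |x| ≤ ‖z‖ := Complex.abs_re_le_norm z
  have habs : ‖Complex.tanh z / z‖
      ≤ Real.cosh |x| / (Real.sinh |x| * |x|) := by
    rw [Complex.tanh_eq_sinh_div_cosh, norm_div, norm_div, div_div]
    exact div_le_div₀ (by positivity) hsabs (by positivity)
      (mul_le_mul hcabs hxle hxpos.le (norm_nonneg _))
  have hstep : |(Complex.tanh z / z).re| ≤ Real.cosh |x| / (Real.sinh |x| * |x|) :=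
    le_trans (Complex.abs_re_le_norm _) habs
  refine hstep.trans ?_
  rw [Real.sinh_two_mul, Real.cosh_two_mul]
  have hid : Real.cosh |x| ^ 2 = Real.sinh |x| ^ 2 + 1 := by linarith [Real.cosh_sq' |x|]
  rw [div_le_div_iff₀ (by positivity) (by nlinarith [mul_pos hs hs]), hid]
  nlinarith [mul_pos hs hxpos]
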